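/- Consider scheduling n independent tasks with processing times p_1,...,p_n on m identical machines. Any list schedule (a schedule in which no machine is idle while an unscheduled task remains) has makespan at most W/m + p_max, where W is the sum of all processing times and p_max is the maximum processing time. Consequently, any list schedule has makespan at most 2 times the optimal makespan. -/
import Mathlib


/-- A non-preemptive schedule of tasks (indexed by `ι`, with processing
times `p`) on `m` identical machines. -/
structure MSched (ι : Type) (m : ℕ) (p : ι → ℝ) where
  machine : ι → Fin m
  start : ι → ℝ
  hstart : ∀ j, 0 ≤ start j
  disj : ∀ i j : ι, i ≠ j → machine i = machine j →
    start i + p i ≤ start j ∨ start j + p j ≤ start i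

/-- Completion time of task `j`. -/
def MSched.finish {ι : Type} {m : ℕ} {p : ι → ℝ} (S : MSched ι m p) (j : ι) : ℝ :=
  S.start j + p j

/-- Machine `q` is busy at time `t`. -/
def MSched.busyAt {ι : Type} {m : ℕ} {p : ι → ℝ} (S : MSched ι m p)
    (q : Fin m) (t : ℝ) : Prop :=
  ∃ j, S.machine j = q ∧ S.start j ≤ t ∧ t < S.finish j

/-- Makespan: maximum completion time. -/
noncomputable def MSched.makespan {ι : Type} [Fintype ι] {m : ℕ} {p : ι → ℝ}
    (hne : Nonempty ι) (S : MSched ι m p) : ℝ :=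
  Finset.univ.sup' (Finset.univ_nonempty_iff.mpr hne) S.finish

/-- List schedule: no machine is idle while an unstarted task remains. -/
def MSched.isList {ι : Type} {m : ℕ} {p : ι → ℝ} (S : MSched ι m p) : Prop :=
  ∀ t : ℝ, 0 ≤ t → (∃ q : Fin m, ¬ S.busyAt q t) → ∀ j, S.start j ≤ t

/-- Graham's bound for list scheduling of independent tasks on
`m` identical machines: any list schedule has makespan at most `W/m + pmax`,
hence at most twice the optimal makespan `Copt`
(which satisfies `Copt ≥ W/m` and `Copt ≥ pmax`). -/
theorem list_scheduling_two_approx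
    (n m : ℕ) (hn : 0 < n) (hm : 0 < m)
    (p : Fin n → ℝ) (hp : ∀ j, 0 < p j)
    (S : MSched (Fin n) m p) (hlist : S.isList)
    (W pmax Copt : ℝ)
    (hW : W = ∑ j, p j)
    (hpmax1 : ∀ j, p j ≤ pmax) (hpmax2 : ∃ j, p j = pmax)
    (hopt1 : W / m ≤ Copt) (hopt2 : pmax ≤ Copt) :
    S.makespan ⟨⟨0, hn⟩⟩ ≤ W / m + pmax ∧ S.makespan ⟨⟨0, hn⟩⟩ ≤ 2 * Copt := by

  -- pick a task achieving the makespan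
  obtain ⟨j0, _, hj0⟩ := Finset.exists_mem_eq_sup' (Finset.univ_nonempty_iff.mpr ⟨⟨0, hn⟩⟩) S.finish
  set s := S.start j0 with hs
  -- every machine is busy throughout [0, s)
  have hbusy : ∀ t, 0 ≤ t → t < s → ∀ q : Fin m, S.busyAt q t := by
    intro t ht hts q
    by_contra hnb
    have := hlist t ht ⟨q, hnb⟩ j0
    linarith
  -- per machine: s ≤ total work on that machine
  have key : ∀ q : Fin m, s ≤ ∑ j ∈ Finset.univ.filter (fun j => S.machine j = q), p j := by
    intro q
    have hsub : Set.Ico (0:ℝ) s ⊆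
        ⋃ j ∈ Finset.univ.filter (fun j => S.machine j = q),
          Set.Ico (S.start j) (S.finish j) := by
      intro t ht
      obtain ⟨j, hjq, h1, h2⟩ := hbusy t ht.1 ht.2 q
      exact Set.mem_biUnion (Finset.mem_filter.mpr ⟨Finset.mem_univ j, hjq⟩) ⟨h1, h2⟩
    have hμ := (MeasureTheory.measure_mono (μ := MeasureTheory.volume) hsub).trans
      (MeasureTheory.measure_biUnion_finset_le _ _)
    rw [Real.volume_Ico] at hμ
    have hμ' : ENNReal.ofReal (s - 0) ≤
        ENNReal.ofReal (∑ j ∈ Finset.univ.filter (fun j => S.machine j = q), p j) := by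
      refine hμ.trans ?_
      rw [ENNReal.ofReal_sum_of_nonneg (fun j _ => (hp j).le)]
      refine Finset.sum_le_sum fun j _ => ?_
      rw [Real.volume_Ico]
      exact ENNReal.ofReal_le_ofReal (by simp [MSched.finish])
    have hnn : 0 ≤ ∑ j ∈ Finset.univ.filter (fun j => S.machine j = q), p j :=
      Finset.sum_nonneg fun j _ => (hp j).le
    have := (ENNReal.ofReal_le_ofReal_iff hnn).mp hμ'
    linarith
  -- sum over machines: m * s ≤ W
  have hms : (m : ℝ) * s ≤ W := by
    have hsum : ∑ q : Fin m, ∑ j ∈ Finset.univ.filter (fun j => S.machine j = q), p j = W := by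
      rw [hW]
      exact Finset.sum_fiberwise _ _ _
    calc (m : ℝ) * s = ∑ _q : Fin m, s := by simp [mul_comm]
      _ ≤ ∑ q : Fin m, ∑ j ∈ Finset.univ.filter (fun j => S.machine j = q), p j :=
          Finset.sum_le_sum fun q _ => key q
      _ = W := hsum
  have hm' : (0:ℝ) < m := Nat.cast_pos.mpr hm
  have hsW : s ≤ W / m := by
    rw [le_div_iff₀ hm']; linarith [hms]
  have h1 : S.makespan ⟨⟨0, hn⟩⟩ ≤ W / m + pmax := by
    rw [MSched.makespan, hj0, MSched.finish]
    have := hpmax1 j0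
    linarith
  exact ⟨h1, h1.trans (by linarith)⟩
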